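/- If the matrices [[Y₂, Y₁B̄₂],[0, I]] and [[X₂ᵀ, 0],[C̄₂X₁, I]] are invertible, then the controller matrices are uniquely recovered from (Â_Q, B̂_Q, Ĉ_Q) by [[A_Q, B_Q],[C_Q, 0]] = [[Y₂, Y₁B̄₂],[0, I]]⁻¹ ( [[Â_Q, B̂_Q],[Ĉ_Q, 0]] − [[Y₁ĀX₁, 0],[0, 0]] ) [[X₂ᵀ, 0],[C̄₂X₁, I]]⁻¹. -/
import Mathlib

open Matrix

/-- Recovery of the controller matrices from the transformed variables:
if `[[Y₂, Y₁B̄₂],[0, I]]` and `[[X₂ᵀ, 0],[C̄₂X₁, I]]` are invertible, then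
`[[A_Q, B_Q],[C_Q, 0]] = [[Y₂, Y₁B̄₂],[0, I]]⁻¹ ([[Â_Q, B̂_Q],[Ĉ_Q, 0]] −
[[Y₁ĀX₁, 0],[0, 0]]) [[X₂ᵀ, 0],[C̄₂X₁, I]]⁻¹`. -/
theorem controller_recovery {n mu pq : ℕ}
    (Abar X1 X2 Y1 Y2 AQ : Matrix (Fin n) (Fin n) ℝ)
    (B2bar : Matrix (Fin n) (Fin mu) ℝ) (CQ : Matrix (Fin mu) (Fin n) ℝ)
    (BQ : Matrix (Fin n) (Fin pq) ℝ) (C2bar : Matrix (Fin pq) (Fin n) ℝ)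
    (AQhat : Matrix (Fin n) (Fin n) ℝ) (BQhat : Matrix (Fin n) (Fin pq) ℝ)
    (CQhat : Matrix (Fin mu) (Fin n) ℝ)
    (hAQhat : AQhat = Y1 * Abar * X1 + Y1 * B2bar * CQ * X2ᵀ +
      Y2 * BQ * C2bar * X1 + Y2 * AQ * X2ᵀ)
    (hBQhat : BQhat = Y2 * BQ)
    (hCQhat : CQhat = CQ * X2ᵀ)
    (hM1 : IsUnit (Matrix.fromBlocks Y2 (Y1 * B2bar) 0
      (1 : Matrix (Fin mu) (Fin mu) ℝ)))
    (hM2 : IsUnit (Matrix.fromBlocks X2ᵀ 0 (C2bar * X1)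
      (1 : Matrix (Fin pq) (Fin pq) ℝ))) :
    Matrix.fromBlocks AQ BQ CQ 0 =
      (Matrix.fromBlocks Y2 (Y1 * B2bar) 0 (1 : Matrix (Fin mu) (Fin mu) ℝ))⁻¹ *
        (Matrix.fromBlocks AQhat BQhat CQhat 0 -
          Matrix.fromBlocks (Y1 * Abar * X1) 0 0 0) *
        (Matrix.fromBlocks X2ᵀ 0 (C2bar * X1) (1 : Matrix (Fin pq) (Fin pq) ℝ))⁻¹ := by
  set M1 := Matrix.fromBlocks Y2 (Y1 * B2bar) 0 (1 : Matrix (Fin mu) (Fin mu) ℝ)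
  set M2 := Matrix.fromBlocks X2ᵀ 0 (C2bar * X1) (1 : Matrix (Fin pq) (Fin pq) ℝ)
  have key : M1 * Matrix.fromBlocks AQ BQ CQ 0 * M2 =
      Matrix.fromBlocks AQhat BQhat CQhat 0 -
        Matrix.fromBlocks (Y1 * Abar * X1) 0 0 0 := by
    subst hAQhat hBQhat hCQhat
    simp only [M1, M2, Matrix.fromBlocks_multiply, sub_eq_add_neg, Matrix.fromBlocks_neg, Matrix.fromBlocks_add]
    simp [Matrix.mul_assoc, Matrix.add_mul]
    abel
  rw [← key, ← Matrix.mul_assoc, ← Matrix.mul_assoc,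
    Matrix.nonsing_inv_mul _ ((Matrix.isUnit_iff_isUnit_det _).mp hM1), Matrix.one_mul,
    Matrix.mul_assoc, Matrix.mul_nonsing_inv _ ((Matrix.isUnit_iff_isUnit_det _).mp hM2),
    Matrix.mul_one]
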